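/- Let n be a unit vector in ℝ³ (with the Euclidean inner product ⟨·,·⟩), and for w ∈ ℝ³ write w_T := w − ⟨w,n⟩·n. Let σ_T, u, v ∈ ℝ³ with ⟨σ_T, n⟩ = 0, let χ ∈ ℝ, and let F > 0 (the friction threshold F = 𝔠(θ−θ_s)·|σ_N + χ u_N|). Then the following are equivalent: (a) there exists z ∈ d(v) such that σ_T = −χ·u_T − F·z; (b) |σ_T + χ·u_T| ≤ F, and if |σ_T + χ·u_T| < F then v_T = 0, and if |σ_T + χ·u_T| = F then there exists ν ≥ 0 with v_T = −ν·(σ_T + χ·u_T). (This is the generalized dry-friction Coulomb law.) -/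

import Mathlib

open scoped Classical

/-- The tangential part `w_T := w − ⟨w,n⟩·n` of a vector w relative to a unit vector n. -/
noncomputable def tang (n w : EuclideanSpace ℝ (Fin 3)) : EuclideanSpace ℝ (Fin 3) :=
  w - (inner ℝ w n : ℝ) • n

/-- The set-valued map d: `d(v) = {v_T/|v_T|}` if `v_T ≠ 0`, and
`d(v) = {w_T : |w| ≤ 1}` if `v_T = 0`. -/

noncomputable def dSet (n v : EuclideanSpace ℝ (Fin 3)) : Set (EuclideanSpace ℝ (Fin 3)) :=
  if tang n v ≠ 0 then {(‖tang n v‖)⁻¹ • tang n v}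
  else {z | ∃ w : EuclideanSpace ℝ (Fin 3), ‖w‖ ≤ 1 ∧ z = tang n w}

lemma inner_tang (n w : EuclideanSpace ℝ (Fin 3)) (hn : ‖n‖ = 1) :
    (inner ℝ (tang n w) n : ℝ) = 0 := by
  unfold tang
  rw [inner_sub_left, real_inner_smul_left, real_inner_self_eq_norm_mul_norm, hn]
  ring

lemma tang_of_inner (n w : EuclideanSpace ℝ (Fin 3)) (h : (inner ℝ w n : ℝ) = 0) :
    tang n w = w := by
  simp [tang, h]

lemma norm_tang_le (n w : EuclideanSpace ℝ (Fin 3)) (hn : ‖n‖ = 1) :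
    ‖tang n w‖ ≤ ‖w‖ := by
  have h := inner_tang n w hn
  have key : ‖w‖ ^ 2 = ‖tang n w‖ ^ 2 + ‖((inner ℝ w n : ℝ)) • n‖ ^ 2 := by
    have hw : tang n w + (inner ℝ w n : ℝ) • n = w := by simp [tang]
    calc ‖w‖ ^ 2 = ‖tang n w + (inner ℝ w n : ℝ) • n‖ ^ 2 := by rw [hw]
    _ = _ := by
      rw [norm_add_sq_real, inner_smul_right, h]; ring
  nlinarith [norm_nonneg (tang n w), norm_nonneg w, sq_nonneg ‖((inner ℝ w n : ℝ)) • n‖]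

theorem stmt14 (n : EuclideanSpace ℝ (Fin 3)) (hn : ‖n‖ = 1)
    (σT u v : EuclideanSpace ℝ (Fin 3)) (hσT : (inner ℝ σT n : ℝ) = 0)
    (χ F : ℝ) (hF : 0 < F) :
    (∃ z ∈ dSet n v, σT = -(χ • tang n u) - F • z) ↔
    (‖σT + χ • tang n u‖ ≤ F ∧
     (‖σT + χ • tang n u‖ < F → tang n v = 0) ∧
     (‖σT + χ • tang n u‖ = F →
        ∃ ν : ℝ, 0 ≤ ν ∧ tang n v = -(ν • (σT + χ • tang n u)))) := by
  set s : EuclideanSpace ℝ (Fin 3) := σT + χ • tang n u with hs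
  have hsn : (inner ℝ s n : ℝ) = 0 := by
    simp [hs, inner_add_left, inner_smul_left, hσT, inner_tang n u hn]
  constructor
  · rintro ⟨z, hz, hσ⟩
    have hsz : s = -(F • z) := by
      rw [hs, hσ]; abel
    by_cases hv : tang n v ≠ 0
    · rw [dSet, if_pos hv] at hz
      rw [Set.mem_singleton_iff] at hz
      have hznorm : ‖z‖ = 1 := by
        rw [hz, norm_smul, norm_inv, norm_norm]
        field_simp [norm_ne_zero_iff.mpr hv]
      have hnF : ‖s‖ = F := by
        rw [hsz, norm_neg, norm_smul, hznorm, Real.norm_eq_abs, abs_of_pos hF, mul_one]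
      refine ⟨le_of_eq hnF, fun hlt => absurd hnF (ne_of_lt hlt), fun _ => ?_⟩
      refine ⟨‖tang n v‖ / F, by positivity, ?_⟩
      rw [hsz, hz]
      rw [smul_neg, neg_neg, smul_smul, smul_smul]
      have h1 : ‖tang n v‖ / F * F * ‖tang n v‖⁻¹ = 1 := by
        rw [div_mul_cancel₀ _ hF.ne', mul_inv_cancel₀ (norm_ne_zero_iff.mpr hv)]
      rw [h1, one_smul]
    · push_neg at hv
      rw [dSet, if_neg (by simpa using hv)] at hz
      obtain ⟨w, hw1, hzw⟩ := hz
      have hznorm : ‖z‖ ≤ 1 := by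
        rw [hzw]; exact (norm_tang_le n w hn).trans hw1
      have hnF : ‖s‖ ≤ F := by
        rw [hsz, norm_neg, norm_smul, Real.norm_eq_abs, abs_of_pos hF]
        nlinarith
      exact ⟨hnF, fun _ => hv, fun _ => ⟨0, le_refl 0, by simp [hv]⟩⟩
  · rintro ⟨hle, hlt, heq⟩
    by_cases hv : tang n v = 0
    · refine ⟨-(F⁻¹ • s), ?_, ?_⟩
      · rw [dSet, if_neg (by simpa using hv)]
        refine ⟨-(F⁻¹ • s), ?_, ?_⟩
        · rw [norm_neg, norm_smul, norm_inv, Real.norm_eq_abs, abs_of_pos hF]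
          rw [inv_mul_le_iff₀ hF]; linarith
        · rw [tang_of_inner]
          simp [inner_neg_left, inner_smul_left, hsn]
      · rw [smul_neg, smul_smul, mul_inv_cancel₀ hF.ne', one_smul, hs]
        abel
    · have hF' : ‖s‖ = F := le_antisymm hle (by
        by_contra h
        exact hv (hlt (lt_of_le_of_ne hle (fun he => h he.ge))))
      obtain ⟨ν, hν, hveq⟩ := heq hF'
      have hνpos : 0 < ν := by
        rcases hν.lt_or_eq with h | h
        · exact h
        · exfalso; apply hv; rw [hveq, ← h]; simp
      have hnv : ‖tang n v‖ = ν * F := by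
        rw [hveq, norm_neg, norm_smul, Real.norm_eq_abs, abs_of_pos hνpos, hF']
      refine ⟨(‖tang n v‖)⁻¹ • tang n v, ?_, ?_⟩
      · rw [dSet, if_pos hv]; rfl
      · rw [hnv, hveq, smul_neg, smul_neg, smul_smul, smul_smul]
        have h1 : F * (ν * F)⁻¹ * ν = 1 := by
          field_simp
        rw [h1, one_smul, hs]
        abel
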